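/- Let n ≥ 2 and let a, k be integers with 0 ≤ a ≤ k. Then 𝒜^{(n)}_{(k−a, 0, …, 0, a)}(z, q) = Σ_{i=0}^{a} (zq)^i · 𝒜^{(n)}_{(i, a−i, 0, …, 0, k−a)}(zq, q), where both subscripts are (n+1)-tuples (the first has k−a in position 0 and a in position n; the second has i in position 0, a−i in position 1, and k−a in position n, all other entries zero). The same identity holds for n = 1 provided the second tuple is interpreted as (i, k−i). -/

import Mathlib

noncomputable section

set_option linter.unreachableTactic false
set_option linter.unusedTactic false
set_option maxHeartbeats 1000000

/-- The weight (sum of parts) of a coloured partition given by its multiplicity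
function `f`, where `f (i, c)` is the number of parts equal to `i` of colour `c`. -/
def wt (f : ℕ × ℕ →₀ ℕ) : ℕ := f.sum fun p v => p.1 * v

/-- The length (number of parts) of a coloured partition. -/
def len (f : ℕ × ℕ →₀ ℕ) : ℕ := f.sum fun _ v => v

/-- `f` is an `n`-coloured partition: parts are at least `1` and colours lie in `{1, …, n}`. -/
def IsCP (n : ℕ) (f : ℕ × ℕ →₀ ℕ) : Prop :=
  ∀ p ∈ f.support, 1 ≤ p.1 ∧ 1 ≤ p.2 ∧ p.2 ≤ n

/-- The extended frequencies of a CMPP (type `A`) coloured partition, with boundary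
conditions `f₀⁽¹⁾ = k 0`, `f₀⁽ᶜ⁾ = 0` for `c ≠ 1` and `f₋₁⁽ᶜ⁾ = k c`. -/
def fextA (k : ℕ → ℕ) (f : ℕ × ℕ →₀ ℕ) (i : ℤ) (c : ℕ) : ℕ :=
  if i = -1 then k c else if i = 0 then (if c = 1 then k 0 else 0) else f (i.toNat, c)

/-- Membership in the CMPP set `𝒜_{k₀,…,kₙ}`: `f` is an `n`-coloured partition and for every
path `(p 0, …, p (2n-1))` — a sequence of integers `≥ -1` with `p j ≡ j (mod 2)` and
`|p (j+1) - p j| = 1`, whose `j`-th entry is read in colour `j/2 + 1` — the total weight of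
the path is at most `k₀ + ⋯ + kₙ`. -/
def MemA (n : ℕ) (k : ℕ → ℕ) (f : ℕ × ℕ →₀ ℕ) : Prop :=
  IsCP n f ∧
  ∀ p : ℕ → ℤ,
    (∀ j < 2 * n, -1 ≤ p j ∧ p j % 2 = (j : ℤ) % 2) →
    (∀ j, j + 1 < 2 * n → |p (j + 1) - p j| = 1) →
    ∑ j ∈ Finset.range (2 * n), fextA k f (p j) (j / 2 + 1) ≤ ∑ c ∈ Finset.range (n + 1), k c

/-- The two-variable generating function `𝒜⁽ⁿ⁾_{(k₀,…,kₙ)}(z,q)`, as a power series in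
the outer variable `z` whose coefficients are power series in the inner variable `q`:
the coefficient of `zˡ qᴺ` is the number of partitions in `𝒜_{k₀,…,kₙ}` with `l(λ) = l`
and `|λ| = N`. -/
def AGF (n : ℕ) (k : ℕ → ℕ) : PowerSeries (PowerSeries ℚ) :=
  PowerSeries.mk fun l => PowerSeries.mk fun N =>
    (Nat.card {f : ℕ × ℕ →₀ ℕ // MemA n k f ∧ len f = l ∧ wt f = N} : ℚ)

/-- The substitution `z ↦ z qᶜ` on a two-variable series. -/
def zsub (c : ℕ) (F : PowerSeries (PowerSeries ℚ)) : PowerSeries (PowerSeries ℚ) :=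
  PowerSeries.mk fun l =>
    (PowerSeries.X : PowerSeries ℚ) ^ (c * l) * PowerSeries.coeff l F

/-- The variable `z`. -/
def Zv : PowerSeries (PowerSeries ℚ) := PowerSeries.X

/-- The variable `q`. -/
def Qv : PowerSeries (PowerSeries ℚ) := PowerSeries.C (PowerSeries.X : PowerSeries ℚ)


-- auxiliary
def colRev (n : ℕ) : ℕ → ℕ := fun c => if 1 ≤ c ∧ c ≤ n then n + 1 - c else c

lemma colRev_invol (n : ℕ) : Function.Involutive (colRev n) := by
  intro c; simp only [colRev]; split_ifs <;> omega

lemma colRev_mem {n c : ℕ} (h1 : 1 ≤ c) (h2 : c ≤ n) : 1 ≤ colRev n c ∧ colRev n c ≤ n := by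
  simp only [colRev]; split_ifs <;> omega

lemma colRev_mem' {n c : ℕ} (h : 1 ≤ colRev n c ∧ colRev n c ≤ n) : 1 ≤ c ∧ c ≤ n := by
  simp only [colRev] at h; split_ifs at h <;> omega

lemma colRev_eq {n c : ℕ} (h1 : 1 ≤ c) (h2 : c ≤ n) : colRev n c = n + 1 - c := by
  simp only [colRev]; split_ifs <;> omega

def shiftEmb (n : ℕ) : ℕ × ℕ ↪ ℕ × ℕ :=
  ⟨fun p => (p.1 + 1, colRev n p.2), by
    intro p q h
    have h1 : p.1 + 1 = q.1 + 1 := congrArg Prod.fst h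
    have h2 : colRev n p.2 = colRev n q.2 := congrArg Prod.snd h
    have h3 := (colRev_invol n).injective h2
    exact Prod.ext (by omega) h3⟩

def down (n : ℕ) (f : ℕ × ℕ →₀ ℕ) : ℕ × ℕ →₀ ℕ :=
  Finsupp.onFinset (f.support.image fun p => (p.1 - 1, colRev n p.2))
    (fun p => if 1 ≤ p.1 then f (p.1 + 1, colRev n p.2) else 0)
    (by
      intro p hp
      have hp' : (if 1 ≤ p.1 then f (p.1 + 1, colRev n p.2) else 0) ≠ 0 := hp
      by_cases h : 1 ≤ p.1
      · rw [if_pos h] at hp'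
        refine Finset.mem_image.2 ⟨(p.1 + 1, colRev n p.2), Finsupp.mem_support_iff.2 hp', ?_⟩
        exact Prod.ext (by simp) (colRev_invol n p.2)
      · rw [if_neg h] at hp'; exact absurd rfl hp')

lemma down_apply (n : ℕ) (f : ℕ × ℕ →₀ ℕ) (p : ℕ × ℕ) :
    down n f p = if 1 ≤ p.1 then f (p.1 + 1, colRev n p.2) else 0 := rfl

def up (n i : ℕ) (f : ℕ × ℕ →₀ ℕ) : ℕ × ℕ →₀ ℕ :=
  Finsupp.embDomain (shiftEmb n) f + Finsupp.single (1, n) i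

lemma up_apply (n i : ℕ) (f : ℕ × ℕ →₀ ℕ) (p : ℕ × ℕ) :
    up n i f p = (if 1 ≤ p.1 then f (p.1 - 1, colRev n p.2) else 0)
      + (if (1, n) = p then i else 0) := by
  simp only [up, Finsupp.add_apply, Finsupp.single_apply]
  congr 1
  by_cases h : 1 ≤ p.1
  · rw [if_pos h]
    have he : shiftEmb n (p.1 - 1, colRev n p.2) = p := by
      simp only [shiftEmb, Function.Embedding.coeFn_mk]
      exact Prod.ext (show p.1 - 1 + 1 = p.1 by omega) (colRev_invol n p.2)
    conv_lhs => rw [← he]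
    exact Finsupp.embDomain_apply_self _ _ _
  · rw [if_neg h]
    apply Finsupp.embDomain_notin_range
    rintro ⟨q, hq⟩
    have : q.1 + 1 = p.1 := congrArg Prod.fst hq
    omega

lemma IsCP_zero_row {n : ℕ} {f : ℕ × ℕ →₀ ℕ} (h : IsCP n f) (c : ℕ) : f (0, c) = 0 := by
  by_contra hne
  have := h (0, c) (Finsupp.mem_support_iff.2 hne)
  omega

lemma IsCP_col {n : ℕ} {f : ℕ × ℕ →₀ ℕ} (h : IsCP n f) {v c : ℕ} (hc : ¬ (1 ≤ c ∧ c ≤ n)) :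
    f (v, c) = 0 := by
  by_contra hne
  have := h (v, c) (Finsupp.mem_support_iff.2 hne)
  exact hc ⟨this.2.1, this.2.2⟩

lemma down_IsCP {n : ℕ} {f : ℕ × ℕ →₀ ℕ} (h : IsCP n f) : IsCP n (down n f) := by
  intro p hp
  rw [Finsupp.mem_support_iff, down_apply] at hp
  by_cases h1 : 1 ≤ p.1
  · rw [if_pos h1] at hp
    have h2 := h (p.1 + 1, colRev n p.2) (Finsupp.mem_support_iff.2 hp)
    have := colRev_mem' (n := n) (c := p.2) ⟨h2.2.1, h2.2.2⟩
    exact ⟨h1, this.1, this.2⟩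
  · rw [if_neg h1] at hp; exact absurd rfl hp

lemma up_IsCP {n i : ℕ} (hn : 1 ≤ n) {f : ℕ × ℕ →₀ ℕ} (h : IsCP n f) : IsCP n (up n i f) := by
  intro p hp
  rw [Finsupp.mem_support_iff, up_apply] at hp
  by_cases h1 : (1, n) = p
  · exact h1 ▸ ⟨le_refl 1, hn, le_refl n⟩
  · rw [if_neg h1, add_zero] at hp
    by_cases h2 : 1 ≤ p.1
    · rw [if_pos h2] at hp
      have h3 := h (p.1 - 1, colRev n p.2) (Finsupp.mem_support_iff.2 hp)
      have := colRev_mem' (n := n) (c := p.2) ⟨h3.2.1, h3.2.2⟩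
      exact ⟨h2, this.1, this.2⟩
    · rw [if_neg h2] at hp; exact absurd rfl hp

lemma len_up (n i : ℕ) (f : ℕ × ℕ →₀ ℕ) : len (up n i f) = len f + i := by
  unfold up len
  rw [Finsupp.sum_add_index' (fun _ => rfl) (fun _ _ _ => rfl)]
  rw [Finsupp.sum_embDomain, Finsupp.sum_single_index rfl]

lemma wt_up (n i : ℕ) (f : ℕ × ℕ →₀ ℕ) : wt (up n i f) = wt f + len f + i := by
  unfold up wt
  rw [Finsupp.sum_add_index' (fun p => mul_zero p.1) (fun p b₁ b₂ => mul_add p.1 b₁ b₂)]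
  rw [Finsupp.sum_embDomain]
  have h2 : ((Finsupp.single ((1:ℕ), n) i).sum fun p v => p.1 * v) = i := by
    rw [Finsupp.sum_single_index (a := ((1:ℕ), n)) (b := i) (h := fun p v => p.1 * v) (by simp)]
    simp
  rw [h2]
  simp only [shiftEmb, Function.Embedding.coeFn_mk]
  congr 1
  have : (f.sum fun p v => (p.1 + 1) * v) = (f.sum fun p v => p.1 * v + v) := by
    apply Finsupp.sum_congr
    intro p _
    ring
  refine this.trans ?_; rw [Finsupp.sum_add]
  rfl

lemma up_down (n : ℕ) {f : ℕ × ℕ →₀ ℕ} (hcp : IsCP n f)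
    (h3 : ∀ c, 1 ≤ c → c < n → f (1, c) = 0) :
    up n (f (1, n)) (down n f) = f := by
  ext p
  obtain ⟨v, c⟩ := p
  rw [up_apply]
  rcases Nat.eq_zero_or_pos v with hv | hv
  · subst hv
    simp only [show ¬ (1 ≤ 0) by omega, if_neg, if_false]
    rw [if_neg (by intro h; exact absurd (congrArg Prod.fst h) (by simp))]
    simp [IsCP_zero_row hcp c]
  · have hv' : 1 ≤ (v, c).1 := hv
    rw [if_pos hv', down_apply]
    rcases Nat.lt_or_ge v 2 with hv2 | hv2
    · have hv1 : v = 1 := by omega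
      subst hv1
      simp only [show (1:ℕ) - 1 = 0 from rfl, show ¬ (1 ≤ 0) by omega, if_neg, if_false]
      by_cases hc : c = n
      · subst hc; rw [if_pos rfl]; simp
      · rw [if_neg (by intro h; exact hc (congrArg Prod.snd h).symm)]
        by_cases hcn : 1 ≤ c ∧ c ≤ n
        · have : c < n := by omega
          rw [h3 c hcn.1 this]
        · rw [IsCP_col hcp hcn]
    · rw [if_pos (by omega : 1 ≤ v - 1)]
      rw [if_neg (by intro h; have := congrArg Prod.fst h; simp at this; omega)]
      have : v - 1 + 1 = v := by omega
      rw [this, colRev_invol n c, add_zero]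

lemma down_up (n i : ℕ) {f : ℕ × ℕ →₀ ℕ} (h0 : ∀ c, f (0, c) = 0) :
    down n (up n i f) = f := by
  ext p
  obtain ⟨v, c⟩ := p
  rw [down_apply]
  rcases Nat.eq_zero_or_pos v with hv | hv
  · subst hv
    rw [if_neg (by omega)]
    exact (h0 c).symm
  · have hv' : 1 ≤ (v, c).1 := hv
    rw [if_pos hv', up_apply]
    rw [if_pos (by simp)]
    rw [if_neg (by intro h; have := congrArg Prod.fst h; simp at this; omega)]
    rw [add_zero]
    congr 1
    exact Prod.ext (by simp) (colRev_invol n c)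

lemma val_le_len (f : ℕ × ℕ →₀ ℕ) (p : ℕ × ℕ) : f p ≤ len f := by
  by_cases h : p ∈ f.support
  · exact Finset.single_le_sum (f := fun q => f q) (fun q _ => Nat.zero_le _) h
  · rw [Finsupp.notMem_support_iff] at h; omega

lemma part_le_wt {f : ℕ × ℕ →₀ ℕ} {p : ℕ × ℕ} (hp : p ∈ f.support) : p.1 ≤ wt f := by
  have h1 : p.1 * f p ≤ wt f :=
    Finset.single_le_sum (f := fun q => q.1 * f q) (fun q _ => Nat.zero_le _) hp
  have h2 : 1 ≤ f p := Nat.one_le_iff_ne_zero.2 (Finsupp.mem_support_iff.1 hp)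
  calc p.1 = p.1 * 1 := by ring
  _ ≤ p.1 * f p := Nat.mul_le_mul_left _ h2
  _ ≤ wt f := h1

lemma len_le_wt {n : ℕ} {f : ℕ × ℕ →₀ ℕ} (h : IsCP n f) : len f ≤ wt f := by
  apply Finset.sum_le_sum
  intro p hp
  have := (h p hp).1
  exact Nat.le_mul_of_pos_left _ (by omega)

lemma finite_cp (n L W : ℕ) :
    Finite {f : ℕ × ℕ →₀ ℕ // IsCP n f ∧ len f = L ∧ wt f = W} := by
  let S := (Finset.range (W + 1)) ×ˢ (Finset.range (n + 1))
  apply Finite.of_injective (β := ({p : ℕ × ℕ // p ∈ S} → Fin (L + 1)))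
    (fun f => fun p => ⟨f.1 p.1, by
      have := val_le_len f.1 p.1
      have hl := f.2.2.1
      omega⟩)
  intro f g hfg
  apply Subtype.ext
  ext p
  by_cases hp : p ∈ S
  · have := congrFun hfg ⟨p, hp⟩
    simpa using congrArg Fin.val this
  · have h1 : f.1 p = 0 := by
      by_contra hne
      have hs := Finsupp.mem_support_iff.2 hne
      have h2 := f.2.1 p hs
      have h3 := part_le_wt hs
      rw [f.2.2.2] at h3
      exact hp (Finset.mem_product.2 ⟨Finset.mem_range.2 (by omega),
        Finset.mem_range.2 (by omega)⟩)
    have h2 : g.1 p = 0 := by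
      by_contra hne
      have hs := Finsupp.mem_support_iff.2 hne
      have h2 := g.2.1 p hs
      have h3 := part_le_wt hs
      rw [g.2.2.2] at h3
      exact hp (Finset.mem_product.2 ⟨Finset.mem_range.2 (by omega),
        Finset.mem_range.2 (by omega)⟩)
    rw [h1, h2]

def KL (n a k : ℕ) : ℕ → ℕ := fun j => if j = 0 then k - a else if j = n then a else 0

def KR (n a k i : ℕ) : ℕ → ℕ := fun j =>
  (if j = 0 then i else 0) + (if j = 1 then a - i else 0) + (if j = n then k - a else 0)

lemma sum_KL {n a k : ℕ} (hn : 1 ≤ n) (hak : a ≤ k) :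
    ∑ c ∈ Finset.range (n + 1), KL n a k c = k := by
  have h : ∀ j ∈ Finset.range (n + 1), KL n a k j =
      (if j = 0 then k - a else 0) + (if j = n then a else 0) := by
    intro j _
    simp only [KL]
    split_ifs <;> omega
  rw [Finset.sum_congr rfl h, Finset.sum_add_distrib]
  rw [Finset.sum_ite_eq' (Finset.range (n + 1)) 0 (fun _ => k - a),
    Finset.sum_ite_eq' (Finset.range (n + 1)) n (fun _ => a)]
  simp only [Finset.mem_range]
  rw [if_pos (by omega), if_pos (by omega)]
  omega

lemma sum_KR {n a k i : ℕ} (hn : 1 ≤ n) (hak : a ≤ k) (hia : i ≤ a) :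
    ∑ c ∈ Finset.range (n + 1), KR n a k i c = k := by
  simp only [KR]
  rw [Finset.sum_add_distrib, Finset.sum_add_distrib]
  rw [Finset.sum_ite_eq' (Finset.range (n + 1)) 0 (fun _ => i),
    Finset.sum_ite_eq' (Finset.range (n + 1)) 1 (fun _ => a - i),
    Finset.sum_ite_eq' (Finset.range (n + 1)) n (fun _ => k - a)]
  simp only [Finset.mem_range]
  rw [if_pos (by omega), if_pos (by omega), if_pos (by omega)]
  omega

def spike (s : ℕ) : ℕ → ℤ := fun j => if j = s then 1 else if j % 2 = 0 then 0 else -1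

lemma spike_valid1 {n : ℕ} (s : ℕ) (hs : s % 2 = 1) :
    ∀ j < 2 * n, -1 ≤ spike s j ∧ spike s j % 2 = (j : ℤ) % 2 := by
  intro j _
  simp only [spike]
  split_ifs <;> constructor <;> omega

lemma spike_valid2 {n : ℕ} (s : ℕ) (hs : s % 2 = 1) :
    ∀ j, j + 1 < 2 * n → |spike s (j + 1) - spike s j| = 1 := by
  intro j _
  simp only [spike]
  split_ifs <;> first | (exfalso; omega) | decide

lemma spike_sum {n a k : ℕ} (hn : 1 ≤ n) (f : ℕ × ℕ →₀ ℕ)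
    (s : ℕ) (hs : s % 2 = 1) (hsn : s < 2 * n) :
    ∑ j ∈ Finset.range (2 * n), fextA (KL n a k) f (spike s j) (j / 2 + 1)
      = (k - a) + f (1, s / 2 + 1) + (if s = 2 * n - 1 then 0 else a) := by
  have hvanish : ∀ j ∈ Finset.range (2 * n), j ∉ ({0, s, 2 * n - 1} : Finset ℕ) →
      fextA (KL n a k) f (spike s j) (j / 2 + 1) = 0 := by
    intro j hj hnot
    have hj' := Finset.mem_range.1 hj
    simp only [Finset.mem_insert, Finset.mem_singleton, not_or] at hnot
    simp only [spike, fextA, KL]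
    split_ifs <;> first | rfl | omega | (exfalso; omega) | exact False.elim ‹False› | exact absurd trivial ‹¬True› | exact False.elim ‹False› | exact absurd trivial ‹¬True›
  have hsubset : ({0, s, 2 * n - 1} : Finset ℕ) ⊆ Finset.range (2 * n) := by
    intro x hx
    simp only [Finset.mem_insert, Finset.mem_singleton] at hx
    rcases hx with h | h | h <;> (subst h; exact Finset.mem_range.2 (by omega))
  rw [← Finset.sum_subset hsubset hvanish]
  have e0 : fextA (KL n a k) f (spike s 0) (0 / 2 + 1) = k - a := by
    simp only [spike, fextA, KL]
    split_ifs <;> first | rfl | omega | (exfalso; omega) | exact False.elim ‹False› | exact absurd trivial ‹¬True›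
  have es : fextA (KL n a k) f (spike s s) (s / 2 + 1) = f (1, s / 2 + 1) := by
    simp only [spike, fextA]
    split_ifs <;> first | rfl | omega | (exfalso; omega) | exact False.elim ‹False› | exact absurd trivial ‹¬True›
  have el : s ≠ 2 * n - 1 →
      fextA (KL n a k) f (spike s (2 * n - 1)) ((2 * n - 1) / 2 + 1) = a := by
    intro hne
    have hcol : (2 * n - 1) / 2 + 1 = n := by omega
    rw [hcol]
    simp only [spike, fextA, KL]
    split_ifs <;> first | rfl | omega | (exfalso; omega) | exact False.elim ‹False› | exact absurd trivial ‹¬True› | exact False.elim ‹False› | exact absurd trivial ‹¬True›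
  by_cases hcase : s = 2 * n - 1
  · subst hcase
    have : ({0, 2 * n - 1, 2 * n - 1} : Finset ℕ) = {0, 2 * n - 1} := by
      ext x; simp [Finset.mem_insert]
    rw [this, Finset.sum_pair (by omega : (0:ℕ) ≠ 2 * n - 1)]
    rw [e0, es, if_pos rfl]
    omega
  · rw [Finset.sum_insert (by
        simp only [Finset.mem_insert, Finset.mem_singleton]
        push_neg
        constructor <;> omega),
      Finset.sum_pair (by omega : s ≠ 2 * n - 1)]
    rw [e0, es, el hcase, if_neg hcase]
    omega

lemma forced_top {n a k : ℕ} (hn : 1 ≤ n) (hak : a ≤ k) {f : ℕ × ℕ →₀ ℕ}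
    (hf : MemA n (KL n a k) f) : f (1, n) ≤ a := by
  have hs : (2 * n - 1) % 2 = 1 := by omega
  have h := hf.2 (spike (2 * n - 1)) (spike_valid1 _ hs) (spike_valid2 _ hs)
  rw [sum_KL hn hak, spike_sum hn f _ hs (by omega)] at h
  rw [if_pos rfl] at h
  have hcol : (2 * n - 1) / 2 + 1 = n := by omega
  rw [hcol] at h
  omega

lemma forced_mid {n a k : ℕ} (hn : 1 ≤ n) (hak : a ≤ k) {f : ℕ × ℕ →₀ ℕ}
    (hf : MemA n (KL n a k) f) {c : ℕ} (hc1 : 1 ≤ c) (hc2 : c < n) : f (1, c) = 0 := by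
  have hs : (2 * c - 1) % 2 = 1 := by omega
  have h := hf.2 (spike (2 * c - 1)) (spike_valid1 _ hs) (spike_valid2 _ hs)
  rw [sum_KL hn hak, spike_sum hn f _ hs (by omega)] at h
  rw [if_neg (by omega)] at h
  have hcol : (2 * c - 1) / 2 + 1 = c := by omega
  rw [hcol] at h
  omega

lemma pointP {n a k i : ℕ} (hn : 1 ≤ n) (hak : a ≤ k) (hia : i ≤ a)
    {lam mu : ℕ × ℕ →₀ ℕ}
    (H1 : ∀ v c, 1 ≤ v → 1 ≤ c → c ≤ n → mu (v, c) = lam (v + 1, n + 1 - c))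
    (H2 : lam (1, n) = i)
    (H3 : ∀ c, 1 ≤ c → c < n → lam (1, c) = 0) :
    ∀ v : ℤ, 0 ≤ v → ∀ c, 1 ≤ c → c ≤ n →
      fextA (KR n a k i) mu (v - 1) c
        = fextA (KL n a k) lam v (n + 1 - c) + (if v = 0 ∧ c = 1 then a - i else 0) := by
  intro v hv c hc1 hc2
  rcases (by omega : v = 0 ∨ v = 1 ∨ 2 ≤ v) with h0 | h1 | h2
  · subst h0
    have e1 : (0:ℤ) - 1 = -1 := by norm_num
    rw [e1]
    simp only [fextA, KR, KL]
    split_ifs <;> first | rfl | omega | (exfalso; omega) | exact False.elim ‹False› | exact absurd trivial ‹¬True› | tauto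
  · subst h1
    have e1 : (1:ℤ) - 1 = 0 := by norm_num
    rw [e1]
    have eL : fextA (KR n a k i) mu 0 c = if c = 1 then i else 0 := by
      simp only [fextA, KR]
      split_ifs <;> first | rfl | omega | (exfalso; omega) | exact False.elim ‹False› | exact absurd trivial ‹¬True›
    have eR : fextA (KL n a k) lam 1 (n + 1 - c) = lam (1, n + 1 - c) := by
      simp only [fextA]
      split_ifs <;> first | rfl | omega | (exfalso; omega) | exact False.elim ‹False› | exact absurd trivial ‹¬True›
    rw [eL, eR]
    by_cases hc : c = 1
    · subst hc
      rw [show n + 1 - 1 = n by omega, H2]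
      norm_num
    · rw [H3 (n + 1 - c) (by omega) (by omega)]
      simp [hc]
  · have hne1 : v - 1 ≠ -1 := by omega
    have hne2 : v - 1 ≠ 0 := by omega
    have hne3 : v ≠ -1 := by omega
    have hne4 : v ≠ 0 := by omega
    simp only [fextA]
    rw [if_neg hne1, if_neg hne2, if_neg hne3, if_neg hne4,
      if_neg (by rintro ⟨h, -⟩; exact absurd h hne4), add_zero]
    have h5 : (1:ℕ) ≤ (v - 1).toNat := by omega
    rw [H1 (v - 1).toNat c h5 hc1 hc2]
    have h6 : (v - 1).toNat + 1 = v.toNat := by omega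
    rw [h6]

lemma sumR {n a k i : ℕ} (hn : 1 ≤ n) (hak : a ≤ k) (hia : i ≤ a)
    {lam mu : ℕ × ℕ →₀ ℕ}
    (H1 : ∀ v c, 1 ≤ v → 1 ≤ c → c ≤ n → mu (v, c) = lam (v + 1, n + 1 - c))
    (H2 : lam (1, n) = i)
    (H3 : ∀ c, 1 ≤ c → c < n → lam (1, c) = 0)
    (q : ℕ → ℤ) (hq1 : ∀ j < 2 * n, -1 ≤ q j ∧ q j % 2 = (j : ℤ) % 2) :
    ∑ j ∈ Finset.range (2 * n), fextA (KR n a k i) mu (q j) (j / 2 + 1)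
      = (∑ j ∈ Finset.range (2 * n),
          fextA (KL n a k) lam (q (2 * n - 1 - j) + 1) (j / 2 + 1))
        + (if q 1 = -1 then a - i else 0) := by
  have step : ∀ j ∈ Finset.range (2 * n),
      fextA (KR n a k i) mu (q j) (j / 2 + 1)
        = fextA (KL n a k) lam (q j + 1) (n + 1 - (j / 2 + 1))
          + (if q j + 1 = 0 ∧ j / 2 + 1 = 1 then a - i else 0) := by
    intro j hj
    have hj' := Finset.mem_range.1 hj
    have hq := hq1 j hj'
    have hP := pointP hn hak hia H1 H2 H3 (q j + 1) (by omega) (j / 2 + 1)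
      (by omega) (by omega)
    rw [show q j + 1 - 1 = q j by ring] at hP
    exact hP
  rw [Finset.sum_congr rfl step, Finset.sum_add_distrib]
  congr 1
  · rw [← Finset.sum_range_reflect
      (fun j => fextA (KL n a k) lam (q (2 * n - 1 - j) + 1) (j / 2 + 1)) (2 * n)]
    apply Finset.sum_congr rfl
    intro j hj
    have hj' := Finset.mem_range.1 hj
    have e1 : 2 * n - 1 - (2 * n - 1 - j) = j := by omega
    have e2 : (2 * n - 1 - j) / 2 + 1 = n + 1 - (j / 2 + 1) := by omega
    simp only [e1, e2]
  · rw [Finset.sum_eq_single_of_mem 1 (Finset.mem_range.2 (by omega))]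
    · have e3 : (1:ℕ) / 2 + 1 = 1 := rfl
      rw [e3]
      split_ifs <;> first | rfl | omega | (exfalso; omega)
    · intro j hj hne
      rw [if_neg]
      rintro ⟨hq0, hc⟩
      have hj' := Finset.mem_range.1 hj
      have := (hq1 j hj').2
      omega

lemma abs1 {x : ℤ} (h : |x| = 1) : x = 1 ∨ x = -1 := (abs_eq (by norm_num)).1 h

lemma sum_split {M : ℕ} (hM : 1 ≤ M) (g : ℕ → ℕ) :
    ∑ j ∈ Finset.range M, g j = (∑ j ∈ Finset.range (M - 1), g j) + g (M - 1) := by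
  rw [show M = (M - 1) + 1 by omega, Finset.sum_range_succ]
  simp

lemma memA_down {n a k : ℕ} (hn : 1 ≤ n) (hak : a ≤ k) {lam : ℕ × ℕ →₀ ℕ}
    (hf : MemA n (KL n a k) lam) :
    MemA n (KR n a k (lam (1, n))) (down n lam) := by
  have hia : lam (1, n) ≤ a := forced_top hn hak hf
  have H1 : ∀ v c, 1 ≤ v → 1 ≤ c → c ≤ n →
      (down n lam) (v, c) = lam (v + 1, n + 1 - c) := by
    intro v c hv hc1 hc2
    rw [down_apply, if_pos (show 1 ≤ (v, c).1 from hv)]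
    rw [show colRev n (v, c).2 = n + 1 - c from colRev_eq hc1 hc2]
  have H3 : ∀ c, 1 ≤ c → c < n → lam (1, c) = 0 :=
    fun c h1 h2 => forced_mid hn hak hf h1 h2
  refine ⟨down_IsCP hf.1, ?_⟩
  intro q hq1 hq2
  rw [sum_KR hn hak hia]
  rw [sumR hn hak hia H1 rfl H3 q hq1]
  by_cases hq : q 1 = -1
  · have hq0 : q 0 = 0 := by
      have ha := abs1 (hq2 0 (by omega))
      norm_num at ha
      have hb := hq1 0 (by omega)
      rcases ha with h | h <;> omega
    have hval1 : ∀ j < 2 * n,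
        -1 ≤ (if j = 2 * n - 1 then (-1:ℤ) else q (2 * n - 1 - j) + 1) ∧
        (if j = 2 * n - 1 then (-1:ℤ) else q (2 * n - 1 - j) + 1) % 2 = (j : ℤ) % 2 := by
      intro j hj
      split_ifs with h
      · constructor
        · omega
        · omega
      · have := hq1 (2 * n - 1 - j) (by omega)
        constructor <;> omega
    have hval2 : ∀ j, j + 1 < 2 * n →
        |(if j + 1 = 2 * n - 1 then (-1:ℤ) else q (2 * n - 1 - (j + 1)) + 1)
          - (if j = 2 * n - 1 then (-1:ℤ) else q (2 * n - 1 - j) + 1)| = 1 := by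
      intro j hj
      split_ifs with h1 h2 h2
      · exfalso; omega
      · have e1 : 2 * n - 1 - j = 1 := by omega
        rw [e1, hq]
        decide
      · exfalso; omega
      · have e1 : 2 * n - 1 - (j + 1) = 2 * n - 2 - j := by omega
        have e2 : 2 * n - 1 - j = (2 * n - 2 - j) + 1 := by omega
        rw [e1, e2]
        have e3 : q (2 * n - 2 - j) + 1 - (q (2 * n - 2 - j + 1) + 1)
            = -(q (2 * n - 2 - j + 1) - q (2 * n - 2 - j)) := by ring
        rw [e3, abs_neg]
        exact hq2 _ (by omega)
    have hle : (∑ j ∈ Finset.range (2 * n), fextA (KL n a k) lam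
        (if j = 2 * n - 1 then (-1:ℤ) else q (2 * n - 1 - j) + 1) (j / 2 + 1)) ≤ k := by
      have h := hf.2 (fun j => if j = 2 * n - 1 then (-1:ℤ) else q (2 * n - 1 - j) + 1)
        hval1 hval2
      rwa [sum_KL hn hak] at h
    rw [sum_split (by omega) (fun j => fextA (KL n a k) lam
        (if j = 2 * n - 1 then (-1:ℤ) else q (2 * n - 1 - j) + 1) (j / 2 + 1))] at hle
    rw [sum_split (by omega)
      (fun j => fextA (KL n a k) lam (q (2 * n - 1 - j) + 1) (j / 2 + 1))]
    have heq : ∀ j ∈ Finset.range (2 * n - 1),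
        fextA (KL n a k) lam (q (2 * n - 1 - j) + 1) (j / 2 + 1)
          = fextA (KL n a k) lam
            (if j = 2 * n - 1 then (-1:ℤ) else q (2 * n - 1 - j) + 1) (j / 2 + 1) := by
      intro j hj
      have := Finset.mem_range.1 hj
      rw [if_neg (by omega)]
    rw [Finset.sum_congr rfl heq]
    have ecol : (2 * n - 1) / 2 + 1 = n := by omega
    have elast1 : fextA (KL n a k) lam
        (if 2 * n - 1 = 2 * n - 1 then (-1:ℤ) else q (2 * n - 1 - (2 * n - 1)) + 1)
        ((2 * n - 1) / 2 + 1) = a := by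
      rw [if_pos rfl, ecol]
      simp only [fextA, KL]
      split_ifs <;> first | rfl | omega | (exfalso; omega) | exact False.elim ‹False› | exact absurd trivial ‹¬True›
    have elast2 : fextA (KL n a k) lam (q (2 * n - 1 - (2 * n - 1)) + 1)
        ((2 * n - 1) / 2 + 1) = lam (1, n) := by
      rw [show 2 * n - 1 - (2 * n - 1) = 0 by omega, hq0, ecol]
      simp only [fextA]
      split_ifs <;> first | rfl | omega | (exfalso; omega) | exact False.elim ‹False› | exact absurd trivial ‹¬True›
    rw [elast1] at hle
    rw [elast2, if_pos hq]
    omega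
  · rw [if_neg hq, add_zero]
    have hval1 : ∀ j < 2 * n, -1 ≤ q (2 * n - 1 - j) + 1 ∧
        (q (2 * n - 1 - j) + 1) % 2 = (j : ℤ) % 2 := by
      intro j hj
      have := hq1 (2 * n - 1 - j) (by omega)
      constructor <;> omega
    have hval2 : ∀ j, j + 1 < 2 * n →
        |(q (2 * n - 1 - (j + 1)) + 1) - (q (2 * n - 1 - j) + 1)| = 1 := by
      intro j hj
      have e1 : 2 * n - 1 - (j + 1) = 2 * n - 2 - j := by omega
      have e2 : 2 * n - 1 - j = (2 * n - 2 - j) + 1 := by omega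
      rw [e1, e2]
      have e3 : q (2 * n - 2 - j) + 1 - (q (2 * n - 2 - j + 1) + 1)
          = -(q (2 * n - 2 - j + 1) - q (2 * n - 2 - j)) := by ring
      rw [e3, abs_neg]
      exact hq2 _ (by omega)
    have h := hf.2 (fun j => q (2 * n - 1 - j) + 1) hval1 hval2
    rwa [sum_KL hn hak] at h

lemma memA_up {n a k i : ℕ} (hn : 1 ≤ n) (hak : a ≤ k) (hia : i ≤ a)
    {mu : ℕ × ℕ →₀ ℕ} (hmu : MemA n (KR n a k i) mu) :
    MemA n (KL n a k) (up n i mu) := by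
  have h0 : ∀ c, mu (0, c) = 0 := IsCP_zero_row hmu.1
  have H1 : ∀ v c, 1 ≤ v → 1 ≤ c → c ≤ n →
      mu (v, c) = (up n i mu) (v + 1, n + 1 - c) := by
    intro v c hv hc1 hc2
    rw [up_apply, if_pos (show 1 ≤ (v + 1, n + 1 - c).1 by omega)]
    rw [if_neg (show ¬((1, n) = (v + 1, n + 1 - c)) by
      intro h
      have := congrArg Prod.fst h
      simp at this
      omega)]
    rw [add_zero]
    apply congrArg mu
    refine (Prod.ext ?_ ?_).symm
    · simp
    · show colRev n (n + 1 - c) = c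
      rw [colRev_eq (by omega) (by omega)]
      omega
  have H2 : (up n i mu) (1, n) = i := by
    rw [up_apply, if_pos (show 1 ≤ ((1:ℕ), n).1 from le_refl 1), if_pos rfl]
    rw [show ((1:ℕ), n).1 - 1 = 0 from rfl, h0, zero_add]
  have H3 : ∀ c, 1 ≤ c → c < n → (up n i mu) (1, c) = 0 := by
    intro c h1 h2
    rw [up_apply, if_pos (show 1 ≤ ((1:ℕ), c).1 from le_refl 1)]
    rw [if_neg (show ¬((1, n) = (1, c)) by
      intro h
      have := congrArg Prod.snd h
      simp at this
      omega)]
    rw [show ((1:ℕ), c).1 - 1 = 0 from rfl, h0, add_zero]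
  refine ⟨up_IsCP hn hmu.1, ?_⟩
  intro p hp1 hp2
  rw [sum_KL hn hak]
  -- validity of the reflected path
  have hval1 : ∀ j < 2 * n,
      -1 ≤ (if p j = -1 then (1:ℤ) else p j) ∧
      (if p j = -1 then (1:ℤ) else p j) % 2 = (j : ℤ) % 2 := by
    intro j hj
    have := hp1 j hj
    split_ifs with h <;> constructor <;> omega
  have hval2 : ∀ j, j + 1 < 2 * n →
      |(if p (j + 1) = -1 then (1:ℤ) else p (j + 1))
        - (if p j = -1 then (1:ℤ) else p j)| = 1 := by
    intro j hj
    have ha := abs1 (hp2 j hj)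
    have h1 := hp1 j (by omega)
    have h2 := hp1 (j + 1) (by omega)
    split_ifs with hA hB hB
    · exfalso; omega
    · have hx : p j = 0 := by omega
      rw [hx]
      decide
    · have hx : p (j + 1) = 0 := by omega
      rw [hx]
      decide
    · exact hp2 j hj
  -- validity of q
  have hq1 : ∀ j < 2 * n,
      -1 ≤ ((if p (2 * n - 1 - j) = -1 then (1:ℤ) else p (2 * n - 1 - j)) - 1) ∧
      ((if p (2 * n - 1 - j) = -1 then (1:ℤ) else p (2 * n - 1 - j)) - 1) % 2
        = (j : ℤ) % 2 := by
    intro j hj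
    have := hp1 (2 * n - 1 - j) (by omega)
    split_ifs with h <;> constructor <;> omega
  have hq2' : ∀ j, j + 1 < 2 * n →
      |((if p (2 * n - 1 - (j + 1)) = -1 then (1:ℤ) else p (2 * n - 1 - (j + 1))) - 1)
        - ((if p (2 * n - 1 - j) = -1 then (1:ℤ) else p (2 * n - 1 - j)) - 1)| = 1 := by
    intro j hj
    have e1 : 2 * n - 1 - (j + 1) = 2 * n - 2 - j := by omega
    have e2 : 2 * n - 1 - j = (2 * n - 2 - j) + 1 := by omega
    rw [e1, e2]
    have e3 : ∀ x y : ℤ, (x - 1) - (y - 1) = -(y - x) := by intro x y; ring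
    rw [e3, abs_neg]
    exact hval2 (2 * n - 2 - j) (by omega)
  have hmu2 := hmu.2 (fun j => (if p (2 * n - 1 - j) = -1 then (1:ℤ) else p (2 * n - 1 - j)) - 1)
    hq1 hq2'
  rw [sum_KR hn hak hia] at hmu2
  rw [sumR hn hak hia H1 H2 H3 _ hq1] at hmu2
  -- rewrite the reflected-reflected sum to the phat sum
  have hcongr : ∀ j ∈ Finset.range (2 * n),
      fextA (KL n a k) (up n i mu)
        ((if p (2 * n - 1 - (2 * n - 1 - j)) = -1 then (1:ℤ) else p (2 * n - 1 - (2 * n - 1 - j))) - 1 + 1)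
        (j / 2 + 1)
      = fextA (KL n a k) (up n i mu) (if p j = -1 then (1:ℤ) else p j) (j / 2 + 1) := by
    intro j hj
    have hj' := Finset.mem_range.1 hj
    rw [show 2 * n - 1 - (2 * n - 1 - j) = j by omega]
    congr 1
    ring
  rw [Finset.sum_congr rfl hcongr] at hmu2
  -- hmu2 : (∑ phat-sum) + ind_q ≤ k
  -- now compare the p-sum with the phat-sum
  rw [sum_split (by omega) (fun j => fextA (KL n a k) (up n i mu) (p j) (j / 2 + 1))]
  rw [sum_split (by omega)
    (fun j => fextA (KL n a k) (up n i mu) (if p j = -1 then (1:ℤ) else p j) (j / 2 + 1))] at hmu2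
  have hterm : ∀ j ∈ Finset.range (2 * n - 1),
      fextA (KL n a k) (up n i mu) (p j) (j / 2 + 1)
        ≤ fextA (KL n a k) (up n i mu) (if p j = -1 then (1:ℤ) else p j) (j / 2 + 1) := by
    intro j hj
    have hj' := Finset.mem_range.1 hj
    by_cases hA : p j = -1
    · rw [if_pos hA, hA]
      -- j is odd and j < 2n-1, so colour < n, LHS = KL (j/2+1) = 0
      have hpar := (hp1 j (by omega)).2
      have hodd : j % 2 = 1 := by omega
      have hLHS : fextA (KL n a k) (up n i mu) (-1) (j / 2 + 1) = 0 := by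
        simp only [fextA, KL]
        split_ifs <;> first | rfl | omega | (exfalso; omega) | exact False.elim ‹False› | exact absurd trivial ‹¬True›
      rw [hLHS]
      exact Nat.zero_le _
    · rw [if_neg hA]
  have hsum := Finset.sum_le_sum hterm
  -- last-term comparison
  have hlast : fextA (KL n a k) (up n i mu) (p (2 * n - 1)) ((2 * n - 1) / 2 + 1)
      ≤ fextA (KL n a k) (up n i mu)
          (if p (2 * n - 1) = -1 then (1:ℤ) else p (2 * n - 1)) ((2 * n - 1) / 2 + 1)
        + (if ((if p (2 * n - 1 - 1) = -1 then (1:ℤ) else p (2 * n - 1 - 1)) - 1) = -1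
            then a - i else 0) := by
    by_cases hA : p (2 * n - 1) = -1
    · -- p (2n-2) = 0, so indicator fires
      have hplt : 2 * n - 1 - 1 = 2 * n - 2 := by omega
      have hprev : p (2 * n - 2) = 0 := by
        have ha := abs1 (hp2 (2 * n - 2) (by omega))
        have hb := hp1 (2 * n - 2) (by omega)
        rw [show 2 * n - 2 + 1 = 2 * n - 1 by omega] at ha
        rw [hA] at ha
        rcases ha with h | h <;> omega
      have hprev' : p (2 * n - 1 - 1) = 0 := by rw [hplt]; exact hprev
      rw [if_pos hA, hA]
      have hcond : ((if p (2 * n - 1 - 1) = -1 then (1:ℤ) else p (2 * n - 1 - 1)) - 1) = -1 := by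
        rw [hprev']
        norm_num
      rw [if_pos hcond]
      have ecol : (2 * n - 1) / 2 + 1 = n := by omega
      rw [ecol]
      have eL : fextA (KL n a k) (up n i mu) (-1) n = a := by
        simp only [fextA, KL]
        split_ifs <;> first | rfl | omega | (exfalso; omega) | exact False.elim ‹False› | exact absurd trivial ‹¬True›
      have eR : fextA (KL n a k) (up n i mu) 1 n = i := by
        simp only [fextA]
        rw [if_neg (by norm_num), if_neg (by norm_num)]
        exact H2
      rw [eL, eR]
      omega
    · rw [if_neg hA]
      omega
  omega

lemma up_one_n {n i : ℕ} {mu : ℕ × ℕ →₀ ℕ} (h0 : ∀ c, mu (0, c) = 0) :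
    (up n i mu) (1, n) = i := by
  rw [up_apply, if_pos (show 1 ≤ ((1:ℕ), n).1 from le_refl 1), if_pos rfl]
  rw [show ((1:ℕ), n).1 - 1 = 0 from rfl, h0, zero_add]

lemma down_len_wt {n a k : ℕ} (hn : 1 ≤ n) (hak : a ≤ k) {f : ℕ × ℕ →₀ ℕ}
    (hf : MemA n (KL n a k) f) :
    len (down n f) + f (1, n) = len f ∧ wt (down n f) + len f = wt f := by
  have hud : up n (f (1, n)) (down n f) = f :=
    up_down n hf.1 (fun c h1 h2 => forced_mid hn hak hf h1 h2)
  have h1 : len (down n f) + f (1, n) = len f := by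
    conv_rhs => rw [← hud]
    rw [len_up]
  refine ⟨h1, ?_⟩
  have h2 : wt f = wt (down n f) + len (down n f) + f (1, n) := by
    conv_lhs => rw [← hud]
    rw [wt_up]
  omega

lemma card_eq {n a k : ℕ} (hn : 1 ≤ n) (hak : a ≤ k) (l N : ℕ) :
    Nat.card {f : ℕ × ℕ →₀ ℕ // MemA n (KL n a k) f ∧ len f = l ∧ wt f = N}
      = ∑ i ∈ Finset.range (a + 1), if i ≤ l ∧ l ≤ N then
          Nat.card {f : ℕ × ℕ →₀ ℕ //
            MemA n (KR n a k i) f ∧ len f = l - i ∧ wt f = N - l}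
        else 0 := by
  have E1 : {f : ℕ × ℕ →₀ ℕ // MemA n (KL n a k) f ∧ len f = l ∧ wt f = N}
      ≃ {x : Fin (a + 1) × (ℕ × ℕ →₀ ℕ) //
          MemA n (KR n a k x.1.1) x.2 ∧ len x.2 + x.1.1 = l ∧ wt x.2 + l = N} :=
    { toFun := fun x => ⟨(⟨x.1 (1, n), Nat.lt_succ_of_le (forced_top hn hak x.2.1)⟩,
        down n x.1),
        ⟨memA_down hn hak x.2.1, by
          show len (down n x.1) + x.1 (1, n) = l
          have h := (down_len_wt hn hak x.2.1).1
          have hl := x.2.2.1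
          omega, by
          show wt (down n x.1) + l = N
          have h := (down_len_wt hn hak x.2.1).2
          have hl := x.2.2.1
          have hw := x.2.2.2
          omega⟩⟩
      invFun := fun y => ⟨up n y.1.1.1 y.1.2,
        ⟨memA_up hn hak (Nat.lt_succ_iff.mp y.1.1.isLt) y.2.1, by
          rw [len_up]
          have := y.2.2.1
          omega, by
          rw [wt_up]
          have h1 := y.2.2.1
          have h2 := y.2.2.2
          omega⟩⟩
      left_inv := fun x => Subtype.ext
        (up_down n x.2.1.1 (fun c h1 h2 => forced_mid hn hak x.2.1 h1 h2))
      right_inv := fun y => Subtype.ext (Prod.ext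
        (Fin.ext (up_one_n (IsCP_zero_row y.2.1.1)))
        (down_up n _ (IsCP_zero_row y.2.1.1))) }
  rw [Nat.card_congr E1, Nat.card_congr (Equiv.subtypeProdEquivSigmaSubtype
    (fun (i : Fin (a + 1)) (mu : ℕ × ℕ →₀ ℕ) =>
      MemA n (KR n a k i.1) mu ∧ len mu + i.1 = l ∧ wt mu + l = N))]
  have hFin : ∀ i : Fin (a + 1), Finite {mu : ℕ × ℕ →₀ ℕ //
      MemA n (KR n a k i.1) mu ∧ len mu + i.1 = l ∧ wt mu + l = N} := by
    intro i
    have := finite_cp n (l - i.1) (N - l)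
    apply Finite.of_injective
      (β := {f : ℕ × ℕ →₀ ℕ // IsCP n f ∧ len f = l - i.1 ∧ wt f = N - l})
      (fun x => ⟨x.1, x.2.1.1, by have := x.2.2.1; omega,
        by have h1 := x.2.2.1; have h2 := x.2.2.2; omega⟩)
    intro x y h
    simp only [Subtype.mk.injEq] at h
    exact Subtype.ext h
  letI : ∀ i : Fin (a + 1), Fintype {mu : ℕ × ℕ →₀ ℕ //
      MemA n (KR n a k i.1) mu ∧ len mu + i.1 = l ∧ wt mu + l = N} :=
    fun i => @Fintype.ofFinite _ (hFin i)
  rw [Nat.card_eq_fintype_card, Fintype.card_sigma]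
  rw [← Fin.sum_univ_eq_sum_range (fun i => if i ≤ l ∧ l ≤ N then
    Nat.card {f : ℕ × ℕ →₀ ℕ //
      MemA n (KR n a k i) f ∧ len f = l - i ∧ wt f = N - l} else 0) (a + 1)]
  apply Finset.sum_congr rfl
  intro i _
  rw [← Nat.card_eq_fintype_card]
  by_cases h : i.1 ≤ l ∧ l ≤ N
  · rw [if_pos h]
    exact Nat.card_congr (Equiv.subtypeEquivRight (fun mu =>
      ⟨fun ⟨h1, h2, h3⟩ => ⟨h1, by omega, by omega⟩,
       fun ⟨h1, h2, h3⟩ => ⟨h1, by omega, by omega⟩⟩))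
  · rw [if_neg h]
    have : IsEmpty {mu : ℕ × ℕ →₀ ℕ //
        MemA n (KR n a k i.1) mu ∧ len mu + i.1 = l ∧ wt mu + l = N} := by
      constructor
      rintro ⟨mu, h1, h2, h3⟩
      exact h ⟨by omega, by omega⟩
    exact Nat.card_of_isEmpty

lemma term_coeff (n a k i l N : ℕ) :
    PowerSeries.coeff N (PowerSeries.coeff l
        ((Zv * Qv) ^ i * zsub 1 (AGF n (KR n a k i))))
      = (if i ≤ l ∧ l ≤ N then
          (Nat.card {f : ℕ × ℕ →₀ ℕ //
            MemA n (KR n a k i) f ∧ len f = l - i ∧ wt f = N - l} : ℚ)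
        else 0) := by
  have h1 : (Zv * Qv) ^ i * zsub 1 (AGF n (KR n a k i))
      = PowerSeries.C (PowerSeries.X ^ i)
        * (zsub 1 (AGF n (KR n a k i)) * PowerSeries.X ^ i) := by
    simp only [Zv, Qv]
    rw [mul_pow, ← map_pow]
    ring
  rw [h1, PowerSeries.coeff_C_mul, PowerSeries.coeff_mul_X_pow']
  by_cases hil : i ≤ l
  · rw [if_pos hil]
    rw [show PowerSeries.coeff (l - i) (zsub 1 (AGF n (KR n a k i)))
        = (PowerSeries.X : PowerSeries ℚ) ^ (1 * (l - i))
          * PowerSeries.coeff (l - i) (AGF n (KR n a k i)) from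
      PowerSeries.coeff_mk _ _]
    rw [one_mul]
    rw [show (PowerSeries.X : PowerSeries ℚ) ^ i
        * ((PowerSeries.X : PowerSeries ℚ) ^ (l - i)
          * PowerSeries.coeff (l - i) (AGF n (KR n a k i)))
        = PowerSeries.coeff (l - i) (AGF n (KR n a k i))
          * (PowerSeries.X : PowerSeries ℚ) ^ l from by
      rw [show l = i + (l - i) by omega, pow_add]
      ring_nf
      rw [show i + (l - i) - i = l - i by omega]]
    rw [PowerSeries.coeff_mul_X_pow']
    by_cases hlN : l ≤ N
    · rw [if_pos hlN, if_pos ⟨hil, hlN⟩]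
      simp only [AGF, PowerSeries.coeff_mk]
    · rw [if_neg hlN, if_neg (by tauto)]
  · rw [if_neg hil, if_neg (by tauto), mul_zero, map_zero]

/-- Equation (3.11) (first part of Proposition 3.2): for `0 ≤ a ≤ k` and `n ≥ 1`,
`𝒜⁽ⁿ⁾_{(k−a,0,…,0,a)}(z,q) = Σ_{i=0}^{a} (zq)^i 𝒜⁽ⁿ⁾_{(i,a−i,0,…,0,k−a)}(zq,q)`.
The second boundary tuple is written additively so that for `n = 1` it is the
tuple `(i, k−i)`, as required. -/
theorem cmpp_functional_equation_one (n a k : ℕ) (hn : 1 ≤ n) (hak : a ≤ k) :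
    AGF n (fun j => if j = 0 then k - a else if j = n then a else 0) =
      ∑ i ∈ Finset.range (a + 1), (Zv * Qv) ^ i *
        zsub 1 (AGF n (fun j =>
          (if j = 0 then i else 0) + (if j = 1 then a - i else 0) +
            (if j = n then k - a else 0))) := by
  show AGF n (KL n a k)
    = ∑ i ∈ Finset.range (a + 1), (Zv * Qv) ^ i * zsub 1 (AGF n (KR n a k i))
  apply PowerSeries.ext
  intro l
  apply PowerSeries.ext
  intro N
  rw [map_sum, map_sum]
  rw [Finset.sum_congr rfl (fun i _ => term_coeff n a k i l N)]
  simp only [AGF, PowerSeries.coeff_mk]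
  rw [card_eq hn hak l N]
  push_cast
  apply Finset.sum_congr rfl
  intro i _
  split_ifs <;> simp
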